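/- For α ∈ ℝ_{>0} define S(α) = 1/2 − ζ(2)·α + Σ_{a/q ∈ ℚ ∩ (0,α]} μ(q)²/(φ(q)²σ(q)), where the sum is over all rational numbers in (0, α] written in lowest terms a/q with a, q coprime positive integers. Then the defining sum converges absolutely, and S(α+1) = S(α) for all α > 0. -/

import Mathlib

open scoped BigOperators Real

open Classical in
/-- The summand of `S(α)` attached to a pair `(a,q)`: equals `μ(q)²/(φ(q)²σ(q))` when
`a, q > 0` are coprime and `a/q ∈ (0, α]`, and `0` otherwise. -/
noncomputable def Ssummand (α : ℝ) (p : ℕ × ℕ) : ℝ :=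
  if 0 < p.1 ∧ 0 < p.2 ∧ Nat.Coprime p.1 p.2 ∧ (p.1 : ℝ) / p.2 ≤ α then
    (ArithmeticFunction.moebius p.2 : ℝ) ^ 2 /
      ((Nat.totient p.2 : ℝ) ^ 2 * (ArithmeticFunction.sigma 1 p.2 : ℝ))
  else 0

/-- `S(α) = 1/2 - ζ(2)α + Σ_{a/q ∈ ℚ ∩ (0,α]} μ(q)²/(φ(q)²σ(q))`, with `ζ(2) = π²/6` and the
sum over lowest-terms fractions `a/q` with `a, q` coprime positive integers. -/
noncomputable def Sfun (α : ℝ) : ℝ :=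
  1 / 2 - (π ^ 2 / 6) * α + ∑' p : ℕ × ℕ, Ssummand α p

section Aux

open ArithmeticFunction

/-- `f(q) = μ(q)²/(φ(q)σ(q))`. -/
noncomputable def fval (q : ℕ) : ℝ :=
  (moebius q : ℝ) ^ 2 / ((Nat.totient q : ℝ) * (sigma 1 q : ℝ))

lemma sigma_one_pos {q : ℕ} (hq : 0 < q) : 0 < sigma 1 q := by
  rw [sigma_one_apply]
  exact Finset.sum_pos (fun d hd => Nat.pos_of_mem_divisors hd)
    ⟨q, Nat.mem_divisors_self q hq.ne'⟩

lemma prime_cube_ineq (p : ℕ) (hp : 2 ≤ p) : p ^ 3 ≤ ((p - 1) * (p + 1)) ^ 2 := by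
  obtain ⟨k, rfl⟩ : ∃ k, p = k + 2 := ⟨p - 2, by omega⟩
  have h : k + 2 - 1 = k + 1 := by omega
  rw [h]
  nlinarith [sq_nonneg k]

lemma key_nat_ineq : ∀ n : ℕ, Squarefree n → n ^ 3 ≤ (Nat.totient n * sigma 1 n) ^ 2 := by
  intro n
  induction n using Nat.strong_induction_on with
  | _ n ih =>
    intro hsq
    rcases eq_or_ne n 1 with rfl | hn1
    · simp [sigma_one_apply, Nat.divisors_one]
    have hn0 : n ≠ 0 := by rintro rfl; exact not_squarefree_zero hsq
    set p := n.minFac with hp_def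
    have hp : p.Prime := Nat.minFac_prime hn1
    have hpd : p ∣ n := Nat.minFac_dvd n
    obtain ⟨m, hm⟩ := hpd
    have hm0 : m ≠ 0 := by rintro rfl; simp at hm; exact hn0 hm
    have hpm : ¬ p ∣ m := by
      intro h
      obtain ⟨k, hk⟩ := h
      have : p * p ∣ n := ⟨k, by rw [hm, hk]; ring⟩
      exact hp.not_isUnit (hsq p this)
    have hcop : Nat.Coprime p m := (hp.coprime_iff_not_dvd).2 hpm
    have hmsq : Squarefree m := hsq.squarefree_of_dvd ⟨p, by rw [hm]; ring⟩
    have hmlt : m < n := by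
      rw [hm]
      exact lt_mul_of_one_lt_left (Nat.pos_of_ne_zero hm0) hp.one_lt
    have ihm := ih m hmlt hmsq
    have htot : Nat.totient n = (p - 1) * Nat.totient m := by
      rw [hm, Nat.totient_mul hcop, Nat.totient_prime hp]
    have hsig : sigma 1 n = (p + 1) * sigma 1 m := by
      rw [hm, isMultiplicative_sigma.map_mul_of_coprime hcop]
      congr 1
      rw [show p = p ^ 1 by ring, sigma_one_apply_prime_pow hp]
      simp [Finset.sum_range_succ]; ring
    have hpkey : p ^ 3 ≤ ((p - 1) * (p + 1)) ^ 2 := prime_cube_ineq p hp.two_le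
    calc n ^ 3 = p ^ 3 * m ^ 3 := by rw [hm]; ring
      _ ≤ ((p - 1) * (p + 1)) ^ 2 * (Nat.totient m * sigma 1 m) ^ 2 :=
        Nat.mul_le_mul hpkey ihm
      _ = (Nat.totient n * sigma 1 n) ^ 2 := by rw [htot, hsig]; ring

lemma fval_nonneg (q : ℕ) : 0 ≤ fval q := by
  unfold fval
  positivity

lemma fval_le (q : ℕ) : fval q ≤ ((q : ℝ) ^ ((3 : ℝ) / 2))⁻¹ := by
  rcases Nat.eq_zero_or_pos q with rfl | hq
  · simp [fval]
  by_cases hsq : Squarefree q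
  · have hkey := key_nat_ineq q hsq
    have hμ : (moebius q : ℝ) ^ 2 = 1 := by
      rw [moebius_apply_of_squarefree hsq]
      push_cast
      rw [← pow_mul, mul_comm, pow_mul]
      norm_num
    have hd0 : (0:ℝ) < (Nat.totient q : ℝ) * (sigma 1 q : ℝ) := by
      have := Nat.totient_pos.2 hq
      have := sigma_one_pos hq
      positivity
    have hrle : (q : ℝ) ^ ((3 : ℝ) / 2) ≤ (Nat.totient q : ℝ) * (sigma 1 q : ℝ) := by
      have h2 : ((q : ℝ) ^ ((3 : ℝ) / 2)) ^ 2 ≤ ((Nat.totient q : ℝ) * (sigma 1 q : ℝ)) ^ 2 := by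
        have : ((q : ℝ) ^ ((3 : ℝ) / 2)) ^ 2 = (q : ℝ) ^ (3 : ℕ) := by
          rw [← Real.rpow_natCast ((q:ℝ) ^ ((3:ℝ)/2)) 2, ← Real.rpow_mul (Nat.cast_nonneg q),
            show ((3:ℝ)/2*(2:ℕ)) = ((3:ℕ):ℝ) by norm_num, Real.rpow_natCast]
        rw [this]
        calc ((q:ℝ) ^ (3:ℕ)) = ((q ^ 3 : ℕ) : ℝ) := by norm_cast
          _ ≤ (((Nat.totient q * sigma 1 q) ^ 2 : ℕ) : ℝ) := by exact_mod_cast hkey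
          _ = ((Nat.totient q : ℝ) * (sigma 1 q : ℝ)) ^ 2 := by push_cast; ring
      have hb : (0:ℝ) ≤ (q : ℝ) ^ ((3 : ℝ) / 2) := Real.rpow_nonneg (Nat.cast_nonneg q) _
      nlinarith
    unfold fval
    rw [hμ]
    rw [one_div]
    apply inv_anti₀
    · positivity
    · exact hrle
  · have : moebius q = 0 := by
      rwa [moebius_eq_zero_of_not_squarefree]
    simp [fval, this]
    positivity

lemma summable_fval : Summable fval := by
  apply Summable.of_nonneg_of_le fval_nonneg fval_le
  simp_rw [← one_div]
  exact Real.summable_one_div_nat_rpow.mpr (by norm_num)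

lemma fval_zero : fval 0 = 0 := by simp [fval]

lemma fval_one : fval 1 = 1 := by
  simp [fval, sigma_one_apply, Nat.divisors_one]

lemma fval_mul {m n : ℕ} (h : Nat.Coprime m n) : fval (m * n) = fval m * fval n := by
  unfold fval
  rw [isMultiplicative_moebius.map_mul_of_coprime h, Nat.totient_mul h,
    isMultiplicative_sigma.map_mul_of_coprime h, div_mul_div_comm]
  push_cast
  ring

lemma summable_norm_fval : Summable (fun n => ‖fval n‖) := by
  simpa [Real.norm_eq_abs, abs_of_nonneg (fval_nonneg _)] using summable_fval

lemma fval_localfactor {p : ℕ} (hp : p.Prime) :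
    ∑' e : ℕ, fval (p ^ e) = (1 - ((p : ℝ) ^ 2)⁻¹)⁻¹ := by
  have h0 : ∀ e ∉ Finset.range 2, fval (p ^ e) = 0 := by
    intro e he
    simp only [Finset.mem_range, not_lt] at he
    have : moebius (p ^ e) = 0 := by
      rw [moebius_apply_prime_pow hp (by omega)]
      simp [show e ≠ 1 by omega]
    simp [fval, this]
  rw [tsum_eq_sum h0, Finset.sum_range_succ, Finset.sum_range_succ, Finset.sum_range_zero,
    pow_zero, fval_one, pow_one]
  have hp2 : (2 : ℝ) ≤ (p : ℝ) := by exact_mod_cast hp.two_le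
  have hσ : ((sigma 1 p : ℕ) : ℝ) = (p : ℝ) + 1 := by
    rw [sigma_one_apply, hp.divisors, Finset.sum_insert (by simpa using hp.one_lt.ne),
      Finset.sum_singleton]
    push_cast
    ring
  have hφ : ((Nat.totient p : ℕ) : ℝ) = (p : ℝ) - 1 := by
    rw [Nat.totient_prime hp]
    push_cast [hp.one_lt.le]
    ring
  rw [fval, moebius_apply_prime hp, hσ, hφ]
  have h1 : (p : ℝ) - 1 ≠ 0 := by nlinarith
  have h2 : (p : ℝ) + 1 ≠ 0 := by nlinarith
  have h3 : (p : ℝ) ≠ 0 := by nlinarith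
  have h5 : (p : ℝ) ^ 2 - 1 ≠ 0 := by nlinarith
  rw [show (1 - ((p : ℝ) ^ 2)⁻¹) = ((p : ℝ) ^ 2 - 1) / (p : ℝ) ^ 2 by field_simp,
    inv_div]
  field_simp
  ring

noncomputable def gval (n : ℕ) : ℝ := ((n : ℝ) ^ 2)⁻¹

lemma gval_localfactor {p : ℕ} (hp : p.Prime) :
    ∑' e : ℕ, gval (p ^ e) = (1 - ((p : ℝ) ^ 2)⁻¹)⁻¹ := by
  have hp2 : (2 : ℝ) ≤ (p : ℝ) := by exact_mod_cast hp.two_le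
  have h1 : ∀ e : ℕ, gval (p ^ e) = (((p : ℝ) ^ 2)⁻¹) ^ e := by
    intro e
    unfold gval
    push_cast
    rw [← pow_mul, mul_comm e 2, pow_mul, inv_pow]
  simp_rw [h1]
  exact tsum_geometric_of_lt_one (by positivity) (by rw [inv_lt_one_iff₀]; right; nlinarith)

lemma summable_norm_gval : Summable (fun n => ‖gval n‖) := by
  have : Summable (fun n : ℕ => 1 / (n : ℝ) ^ 2) := Real.summable_one_div_nat_pow.mpr (by norm_num)
  apply this.congr
  intro n
  simp [gval, Real.norm_eq_abs, abs_of_nonneg, one_div]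

lemma tsum_gval : ∑' n, gval n = π ^ 2 / 6 := by
  have h := hasSum_zeta_two
  have : ∑' n : ℕ, 1 / (n : ℝ) ^ 2 = π ^ 2 / 6 := h.tsum_eq
  rw [← this]
  congr 1
  funext n
  simp [gval, one_div]

lemma tsum_fval : ∑' n, fval n = π ^ 2 / 6 := by
  have hf := EulerProduct.eulerProduct_hasProd fval_one (fun {m n} h => fval_mul h)
    summable_norm_fval fval_zero
  have hg := EulerProduct.eulerProduct_hasProd (f := gval) (by simp [gval])
    (fun {m n} h => by unfold gval; push_cast; rw [mul_pow, mul_inv]) summable_norm_gval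
    (by simp [gval])
  have hf' : HasProd (fun p : Nat.Primes => (1 - ((p : ℝ) ^ 2)⁻¹)⁻¹) (∑' n, fval n) := by
    have : (fun p : Nat.Primes => ∑' e : ℕ, fval ((p : ℕ) ^ e)) =
        fun p : Nat.Primes => (1 - ((p : ℝ) ^ 2)⁻¹)⁻¹ := by
      funext p
      exact fval_localfactor p.2
    rwa [this] at hf
  have hg' : HasProd (fun p : Nat.Primes => (1 - ((p : ℝ) ^ 2)⁻¹)⁻¹) (∑' n, gval n) := by
    have : (fun p : Nat.Primes => ∑' e : ℕ, gval ((p : ℕ) ^ e)) =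
        fun p : Nat.Primes => (1 - ((p : ℝ) ^ 2)⁻¹)⁻¹ := by
      funext p
      exact gval_localfactor p.2
    rwa [this] at hg
  rw [hf'.unique hg', tsum_gval]

noncomputable def Tval (q : ℕ) : ℝ :=
  (moebius q : ℝ) ^ 2 / ((Nat.totient q : ℝ) ^ 2 * (sigma 1 q : ℝ))

lemma Tval_nonneg (q : ℕ) : 0 ≤ Tval q := by unfold Tval; positivity

lemma Ssummand_nonneg (α : ℝ) (p : ℕ × ℕ) : 0 ≤ Ssummand α p := by
  unfold Ssummand
  split_ifs
  · positivity
  · exact le_rfl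

lemma Ssummand_le_Tval (α : ℝ) (a q : ℕ) : Ssummand α (a, q) ≤ Tval q := by
  unfold Ssummand Tval
  split_ifs
  · exact le_rfl
  · exact Tval_nonneg q

lemma totient_mul_Tval {q : ℕ} (hq : 0 < q) : (Nat.totient q : ℝ) * Tval q = fval q := by
  have hφ : (Nat.totient q : ℝ) ≠ 0 := by
    have := Nat.totient_pos.2 hq
    positivity
  have hσ : ((sigma 1 q : ℕ) : ℝ) ≠ 0 := by
    have := sigma_one_pos hq
    positivity
  unfold Tval fval
  field_simp

lemma Ssummand_support (α : ℝ) (q : ℕ) (a : ℕ)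
    (ha : a ∉ (Finset.Ico 1 (⌊α * q⌋₊ + 1)).filter (fun x => q.Coprime x)) :
    Ssummand α (a, q) = 0 := by
  unfold Ssummand
  rw [if_neg]
  rintro ⟨h1, h2, h3, h4⟩
  apply ha
  have hq' : (0:ℝ) < (q:ℝ) := by exact_mod_cast h2
  have hle : (a : ℝ) ≤ α * q := by
    rw [div_le_iff₀ hq'] at h4
    linarith
  have : a ≤ ⌊α * q⌋₊ := Nat.le_floor hle
  exact Finset.mem_filter.2 ⟨Finset.mem_Ico.2 ⟨h1, by omega⟩, h3.symm⟩

lemma fiber_summable (α : ℝ) (q : ℕ) : Summable (fun a => Ssummand α (a, q)) :=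
  summable_of_ne_finset_zero (s := (Finset.Ico 1 (⌊α * q⌋₊ + 1)).filter (fun x => q.Coprime x))
    (fun a ha => Ssummand_support α q a ha)

lemma fiber_sum_le {α : ℝ} (hα : 0 < α) (q : ℕ) :
    ∑' a, Ssummand α (a, q) ≤ (α + 1) * fval q := by
  rcases Nat.eq_zero_or_pos q with rfl | hq
  · have h0 : ∀ a, Ssummand α (a, 0) = 0 := by
      intro a
      unfold Ssummand
      rw [if_neg]
      rintro ⟨-, h2, -⟩
      exact lt_irrefl 0 h2
    simp only [h0, tsum_zero]
    have : fval 0 = 0 := by simp [fval]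
    rw [this, mul_zero]
  · set s := (Finset.Ico 1 (⌊α * q⌋₊ + 1)).filter (fun x => q.Coprime x) with hs_def
    rw [tsum_eq_sum (Ssummand_support α q)]
    have hcard : s.card ≤ Nat.totient q * (⌊α * q⌋₊ / q + 1) := by
      have := Nat.Ico_filter_coprime_le (a := q) 1 ⌊α * q⌋₊ hq.ne'
      rwa [hs_def, show ⌊α * q⌋₊ + 1 = 1 + ⌊α * q⌋₊ by omega]
    have hsum_le : ∑ a ∈ s, Ssummand α (a, q) ≤ (s.card : ℝ) * Tval q := by
      have := Finset.sum_le_card_nsmul s (fun a => Ssummand α (a, q)) (Tval q)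
        (fun a _ => Ssummand_le_Tval α a q)
      simpa [nsmul_eq_mul] using this
    refine hsum_le.trans ?_
    have hq' : (0:ℝ) < (q:ℝ) := by exact_mod_cast hq
    have hdiv : ((⌊α * q⌋₊ / q : ℕ) : ℝ) ≤ α := by
      calc ((⌊α * q⌋₊ / q : ℕ) : ℝ) ≤ (⌊α * q⌋₊ : ℝ) / (q : ℝ) := Nat.cast_div_le
        _ ≤ (α * q) / q := by
            gcongr
            exact Nat.floor_le (by positivity)
        _ = α := mul_div_cancel_right₀ α hq'.ne'
    calc (s.card : ℝ) * Tval q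
        ≤ ((Nat.totient q * (⌊α * q⌋₊ / q + 1) : ℕ) : ℝ) * Tval q :=
          mul_le_mul_of_nonneg_right (by exact_mod_cast hcard) (Tval_nonneg q)
      _ = (Nat.totient q : ℝ) * (((⌊α * q⌋₊ / q : ℕ) : ℝ) + 1) * Tval q := by push_cast; ring
      _ ≤ (Nat.totient q : ℝ) * (α + 1) * Tval q :=
          mul_le_mul_of_nonneg_right
            (mul_le_mul_of_nonneg_left (by linarith) (by positivity)) (Tval_nonneg q)
      _ = (α + 1) * ((Nat.totient q : ℝ) * Tval q) := by ring
      _ = (α + 1) * fval q := by rw [totient_mul_Tval hq]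

lemma summable_Ssummand {α : ℝ} (hα : 0 < α) : Summable (Ssummand α) := by
  rw [← (Equiv.prodComm ℕ ℕ).summable_iff]
  have hnn : 0 ≤ (Ssummand α ∘ ⇑(Equiv.prodComm ℕ ℕ)) := fun p => Ssummand_nonneg α _
  rw [summable_prod_of_nonneg hnn]
  constructor
  · intro q
    simp only [Function.comp_def, Equiv.prodComm_apply, Prod.swap_prod_mk]
    exact fiber_summable α q
  · simp only [Function.comp_def, Equiv.prodComm_apply, Prod.swap_prod_mk]
    apply Summable.of_nonneg_of_le (fun q => tsum_nonneg (fun a => Ssummand_nonneg α _))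
      (fun q => fiber_sum_le hα q)
    exact summable_fval.mul_left (α + 1)

lemma diff_eq {α : ℝ} (hα : 0 < α) {q : ℕ} (hq : 0 < q) (a : ℕ) :
    Ssummand (α + 1) (a, q) - Ssummand α (a, q) =
      if a ∈ (Finset.Ico (⌊α * q⌋₊ + 1) (⌊α * q⌋₊ + 1 + q)).filter (fun x => q.Coprime x)
      then Tval q else 0 := by
  have hq' : (0:ℝ) < (q:ℝ) := by exact_mod_cast hq
  have hαq : (0:ℝ) ≤ α * q := by positivity
  by_cases hmem : a ∈ (Finset.Ico (⌊α * q⌋₊ + 1) (⌊α * q⌋₊ + 1 + q)).filter (fun x => q.Coprime x)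
  · rw [if_pos hmem]
    obtain ⟨hico, hcop⟩ := Finset.mem_filter.1 hmem
    obtain ⟨ha1, ha2⟩ := Finset.mem_Ico.1 hico
    have hgt : α * q < (a : ℝ) := (Nat.floor_lt hαq).1 (by omega)
    have hle : (a : ℝ) ≤ (α + 1) * q := by
      have h1 : a ≤ ⌊α * q⌋₊ + q := by omega
      have h2 : ((⌊α * q⌋₊ + q : ℕ) : ℝ) ≤ α * q + q := by
        push_cast
        have := Nat.floor_le hαq
        linarith
      have : (a : ℝ) ≤ ((⌊α * q⌋₊ + q : ℕ) : ℝ) := by exact_mod_cast h1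
      linarith [this.trans h2]
    have h0a : 0 < a := by omega
    unfold Ssummand
    rw [if_pos ⟨h0a, hq, (Nat.coprime_comm.1 hcop), by rw [div_le_iff₀ hq']; linarith⟩,
      if_neg (by
        rintro ⟨-, -, -, h4⟩
        rw [div_le_iff₀ hq'] at h4
        linarith)]
    unfold Tval
    ring
  · rw [if_neg hmem]
    by_cases hB : 0 < a ∧ 0 < q ∧ Nat.Coprime a q ∧ (a : ℝ) / q ≤ α + 1
    · by_cases hA : (a : ℝ) / q ≤ α
      · unfold Ssummand
        rw [if_pos ⟨hB.1, hB.2.1, hB.2.2.1, hB.2.2.2⟩, if_pos ⟨hB.1, hB.2.1, hB.2.2.1, hA⟩]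
        ring
      · exfalso
        apply hmem
        push_neg at hA
        have hgt : α * q < (a : ℝ) := by
          rw [lt_div_iff₀ hq'] at hA
          linarith
        have h1 : ⌊α * q⌋₊ < a := (Nat.floor_lt hαq).2 hgt
        have h2 : a ≤ ⌊α * q⌋₊ + q := by
          have : (a : ℝ) ≤ α * q + q := by
            have := hB.2.2.2
            rw [div_le_iff₀ hq'] at this
            linarith
          have := Nat.le_floor this
          rwa [show α * q + q = α * q + (q:ℕ) by push_cast; ring, Nat.floor_add_natCast hαq] at this
        exact Finset.mem_filter.2 ⟨Finset.mem_Ico.2 ⟨by omega, by omega⟩, hB.2.2.1.symm⟩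
    · unfold Ssummand
      rw [if_neg hB, if_neg (by
        rintro ⟨h1, h2, h3, h4⟩
        exact hB ⟨h1, h2, h3, by linarith⟩)]
      ring

lemma fiber_diff_sum {α : ℝ} (hα : 0 < α) (q : ℕ) :
    ∑' a, (Ssummand (α + 1) (a, q) - Ssummand α (a, q)) = fval q := by
  rcases Nat.eq_zero_or_pos q with rfl | hq
  · have h0 : ∀ a : ℕ, Ssummand (α + 1) (a, 0) - Ssummand α (a, 0) = 0 := by
      intro a
      unfold Ssummand
      rw [if_neg (by rintro ⟨-, h2, -⟩; exact lt_irrefl 0 h2),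
        if_neg (by rintro ⟨-, h2, -⟩; exact lt_irrefl 0 h2)]
      ring
    simp only [h0, tsum_zero]
    simp [fval]
  · set s := (Finset.Ico (⌊α * q⌋₊ + 1) (⌊α * q⌋₊ + 1 + q)).filter (fun x => q.Coprime x)
      with hs_def
    have heq : ∀ a : ℕ, Ssummand (α + 1) (a, q) - Ssummand α (a, q) =
        if a ∈ s then Tval q else 0 := diff_eq hα hq
    simp only [heq]
    rw [tsum_eq_sum (s := s) (fun a ha => if_neg ha)]
    rw [Finset.sum_ite_mem, Finset.inter_self, Finset.sum_const, nsmul_eq_mul]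
    have hcard : s.card = Nat.totient q := Nat.filter_coprime_Ico_eq_totient q (⌊α * q⌋₊ + 1)
    rw [hcard, totient_mul_Tval hq]

set_option maxHeartbeats 1000000 in
theorem Sfun_summable_and_periodic' {α : ℝ} (hα : 0 < α) :
    ∑' p : ℕ × ℕ, Ssummand (α + 1) p = (∑' p : ℕ × ℕ, Ssummand α p) + π ^ 2 / 6 := by
  have hA := summable_Ssummand hα
  have hB := summable_Ssummand (by linarith : (0:ℝ) < α + 1)
  set D : ℕ × ℕ → ℝ := fun p => Ssummand (α + 1) p - Ssummand α p with hD_def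
  have hD : Summable D := hB.sub hA
  have htd : ∑' p : ℕ × ℕ, D p =
      (∑' p : ℕ × ℕ, Ssummand (α + 1) p) - ∑' p : ℕ × ℕ, Ssummand α p := hB.tsum_sub hA
  set G : ℕ × ℕ → ℝ := fun x => D (x.2, x.1) with hG_def
  have hGsum : Summable G := ((Equiv.prodComm ℕ ℕ).summable_iff.2 hD).congr (fun x => rfl)
  have h2 : ∑' x : ℕ × ℕ, G x = ∑' p : ℕ × ℕ, D p := by
    have := (Equiv.prodComm ℕ ℕ).tsum_eq D
    exact this
  have h1 : ∑' x : ℕ × ℕ, G x = ∑' q : ℕ, ∑' a : ℕ, G (q, a) :=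
    hGsum.tsum_prod' (fun q => ((fiber_summable (α + 1) q).sub (fiber_summable α q)))
  have h3 : ∀ q : ℕ, ∑' a : ℕ, G (q, a) = fval q := fun q => fiber_diff_sum hα q
  have hDval : ∑' p : ℕ × ℕ, D p = π ^ 2 / 6 := by
    rw [← h2, h1]
    calc ∑' q : ℕ, ∑' a : ℕ, G (q, a) = ∑' q : ℕ, fval q := by
          exact tsum_congr h3
      _ = π ^ 2 / 6 := tsum_fval
  rw [hDval] at htd
  linarith

end Aux

/-- The sum defining `S(α)` converges absolutely, and `S` is periodic: `S(α+1) = S(α)` for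
all `α > 0`. -/
theorem Sfun_summable_and_periodic :
    (∀ α : ℝ, 0 < α → Summable (Ssummand α)) ∧
    ∀ α : ℝ, 0 < α → Sfun (α + 1) = Sfun α := by
  constructor
  · exact fun α hα => summable_Ssummand hα
  · intro α hα
    unfold Sfun
    rw [Sfun_summable_and_periodic' hα]
    ring
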